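/- For irrational β > 2 and α = β/(β-1), for all nonnegative integers m ≠ n, we have ⌊mα⌋ ≠ ⌊nα⌋, ⌊mβ⌋ ≠ ⌊nβ⌋, and for all positive m, n, ⌊mα⌋ ≠ ⌊nβ⌋. -/

import Mathlib

open scoped symmDiff

lemma floor_mul_strictMono {r : ℝ} (hr : 1 ≤ r) :
    StrictMono (fun n : ℕ => ⌊(n : ℝ) * r⌋) := by
  intro m n hmn
  have h1 : (m : ℝ) * r + 1 ≤ (n : ℝ) * r := by
    have : (m : ℝ) + 1 ≤ (n : ℝ) := by exact_mod_cast hmn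
    nlinarith
  calc ⌊(m : ℝ) * r⌋ < ⌊(m : ℝ) * r⌋ + 1 := by omega
    _ = ⌊(m : ℝ) * r + 1⌋ := by rw [Int.floor_add_one]
    _ ≤ ⌊(n : ℝ) * r⌋ := Int.floor_le_floor h1

theorem stmt_6 (β : ℝ) (hirr : Irrational β) (hβ : 2 < β)
    (α : ℝ) (hα : α = β / (β - 1)) :
    (∀ m n : ℕ, m ≠ n → ⌊(m : ℝ) * α⌋ ≠ ⌊(n : ℝ) * α⌋) ∧
    (∀ m n : ℕ, m ≠ n → ⌊(m : ℝ) * β⌋ ≠ ⌊(n : ℝ) * β⌋) ∧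
    (∀ m n : ℕ, 0 < m → 0 < n → ⌊(m : ℝ) * α⌋ ≠ ⌊(n : ℝ) * β⌋) := by
  have hβ1 : (1 : ℝ) < β - 1 := by linarith
  have hα1 : 1 < α := by
    rw [hα, lt_div_iff₀ (by linarith)]
    linarith
  have hconj : β.HolderConjugate α := by
    exact (Real.holderConjugate_iff_eq_conjExponent (by linarith)).2 hα
  refine ⟨fun m n h => ((floor_mul_strictMono hα1.le).injective.ne_iff).2 h,
    fun m n h => ((floor_mul_strictMono (by linarith : (1:ℝ) ≤ β)).injective.ne_iff).2 h,
    fun m n hm hn heq => ?_⟩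
  have hsym := hirr.beattySeq_symmDiff_beattySeq_pos hconj
  set j : ℤ := ⌊(n : ℝ) * β⌋ with hj
  have hjβ : j ∈ {beattySeq β k | k > 0} := ⟨(n : ℤ), by exact_mod_cast hn, by
    simp [beattySeq, hj]⟩
  have hjα : j ∈ {beattySeq α k | k > 0} := ⟨(m : ℤ), by exact_mod_cast hm, by
    simp [beattySeq, ← heq]⟩
  have hjpos : 0 < j := by
    rw [hj]
    have : (1 : ℝ) ≤ (n : ℝ) * β := by
      have : (1 : ℝ) ≤ (n : ℝ) := by exact_mod_cast hn
      nlinarith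
    exact_mod_cast Int.lt_of_lt_of_le Int.zero_lt_one (Int.le_floor.2 (by exact_mod_cast this))
  have : j ∈ {beattySeq β k | k > 0} ∆ {beattySeq α k | k > 0} := hsym ▸ hjpos
  rw [Set.mem_symmDiff] at this
  tauto
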